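/- arXiv:math/0507417 — 5 statements merged into one kernel-verified Lean document; each statement's English description precedes it below -/
import Mathlib

section
/- Let k = 2, α ∈ (0,1) and ε = (ε_1, ε_2) with ε_i > 0. Let a_i satisfy P_{(0,0)}{x : x_1 > a_1 or x_2 > a_2} = α and P_{ε_1}{X_1 > a_1} = P_{ε_2}{X_2 > a_2}; let b_i satisfy P_0{X_i ≥ b_i} = α; and let ã_i satisfy P_{(0,0)}({x : x_1 > ã_1} ∪ {x : x_2 > ã_2} ∪ {x : x_1 > b_1, x_2 > b_2}) = α and P_{ε_1}{X_1 ≥ ã_1} = P_{ε_2}{X_2 ≥ ã_2}. Then b_i < a_i < ã_i for i = 1, 2. -/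
open MeasureTheory Filter Set
open scoped ENNReal

noncomputable section

/-- A decision rule `D` assigns to each data point the set of rejected hypotheses.
It is *monotone* if raising the coordinates of rejected hypotheses while strictly
lowering those of accepted ones does not change the decision. -/
def MonotoneRule {k : ℕ} (D : (Fin k → ℝ) → Finset (Fin k)) : Prop :=
  ∀ x y : Fin k → ℝ, (∀ i ∈ D x, x i ≤ y i) → (∀ i ∉ D x, y i < x i) → D y = D x

/-- Measurability of a decision rule. -/
def MeasurableRule {k : ℕ} (D : (Fin k → ℝ) → Finset (Fin k)) : Prop :=
  ∀ S : Finset (Fin k), MeasurableSet {x | D x = S}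

/-- Strong control of the familywise error rate at level `α`. -/
def ControlsFWER {k : ℕ} (P : (Fin k → ℝ) → Measure (Fin k → ℝ))
    (D : (Fin k → ℝ) → Finset (Fin k)) (α : ℝ) : Prop :=
  ∀ θ : Fin k → ℝ, P θ {x | ∃ i ∈ D x, θ i ≤ 0} ≤ ENNReal.ofReal α

/-- The distributional assumptions of the paper: each `P θ` is a probability measure with a
strictly positive density; (M) monotonicity in the parameter for signed upper sets; (C) the law
of any subcollection of coordinates depends only on the corresponding parameters; (L) each
coordinate tends to `±∞` in probability as its parameter does. -/
def Setup {k : ℕ} (P : (Fin k → ℝ) → Measure (Fin k → ℝ)) : Prop :=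
  (∀ θ, IsProbabilityMeasure (P θ)) ∧
  (∀ θ, ∃ f : (Fin k → ℝ) → ℝ≥0∞, Measurable f ∧ (∀ x, 0 < f x ∧ f x ≠ ⊤) ∧
    P θ = MeasureTheory.volume.withDensity f) ∧
  (∀ δ : Fin k → ℝ, (∀ i, δ i = 1 ∨ δ i = -1) →
    ∀ θ γ : Fin k → ℝ, (∀ i, δ i * θ i ≤ δ i * γ i) →
    ∀ M : Set (Fin k → ℝ), MeasurableSet M → IsUpperSet M →
    P θ {x | (fun i => δ i * x i) ∈ M} ≤ P γ {x | (fun i => δ i * x i) ∈ M}) ∧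
  (∀ (I : Set (Fin k)) (θ γ : Fin k → ℝ), (∀ i ∈ I, θ i = γ i) →
    Measure.map I.restrict (P θ) = Measure.map I.restrict (P γ)) ∧
  (∀ (θ : Fin k → ℝ) (i : Fin k) (c : ℝ),
    Tendsto (fun t => P (Function.update θ i t) {x | x i ≤ c}) atTop (nhds 0) ∧
    Tendsto (fun t => P (Function.update θ i t) {x | c ≤ x i}) atBot (nhds 0))


lemma aux_vol2 (s0 s1 : Set ℝ) :
    volume {x : Fin 2 → ℝ | x 0 ∈ s0 ∧ x 1 ∈ s1} = volume s0 * volume s1 := by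
  have h : {x : Fin 2 → ℝ | x 0 ∈ s0 ∧ x 1 ∈ s1} = Set.pi univ ![s0, s1] := by
    ext x; simp [Set.mem_pi, Fin.forall_fin_two]
  rw [h, volume_pi_pi, Fin.prod_univ_two]
  simp

lemma aux_hyper (i : Fin 2) (c : ℝ) : volume {x : Fin 2 → ℝ | x i = c} = 0 := by
  classical
  have h : {x : Fin 2 → ℝ | x i = c} = Set.pi univ (fun j => if j = i then ({c} : Set ℝ) else univ) := by
    ext x
    simp only [Set.mem_pi, mem_univ, forall_true_left, mem_setOf_eq]
    constructor
    · intro hx j; by_cases hj : j = i <;> simp [hj, hx]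
    · intro hx; have := hx i; simpa using this
  rw [h, volume_pi_pi]
  refine Finset.prod_eq_zero (Finset.mem_univ i) ?_
  simp

lemma aux_pos {f : (Fin 2 → ℝ) → ℝ≥0∞} (hf : Measurable f) (hpos : ∀ x, 0 < f x)
    {S : Set (Fin 2 → ℝ)} (hS : volume S ≠ 0) : volume.withDensity f S ≠ 0 := by
  rw [Ne, withDensity_apply_eq_zero hf]
  have h : {x | f x ≠ 0} ∩ S = S := by ext x; simp [(hpos x).ne']
  rw [h]; exact hS

lemma aux_null {f : (Fin 2 → ℝ) → ℝ≥0∞} {S : Set (Fin 2 → ℝ)} (hS : volume S = 0) :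
    volume.withDensity f S = 0 :=
  withDensity_absolutelyContinuous _ _ hS

lemma aux_strict {μ : Measure (Fin 2 → ℝ)} {A C : Set (Fin 2 → ℝ)}
    (hA : MeasurableSet A) (hsub : A ⊆ C) (hfin : μ A ≠ ⊤) (hne : μ (C \ A) ≠ 0) :
    μ A < μ C := by
  have h : μ (A ∪ (C \ A)) = μ A + μ (C \ A) :=
    measure_union' disjoint_sdiff_self_right hA
  rw [union_diff_cancel hsub] at h
  rw [h]
  exact ENNReal.lt_add_right hfin hne

lemma aux_lelt (μ : Measure (Fin 2 → ℝ)) (i : Fin 2) (c : ℝ)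
    (hnull : μ {x | x i = c} = 0) : μ {x | c ≤ x i} = μ {x | c < x i} := by
  refine le_antisymm ?_ (measure_mono fun x hx => show c ≤ x i from le_of_lt hx)
  have hsub : {x : Fin 2 → ℝ | c ≤ x i} ⊆ {x | c < x i} ∪ {x | x i = c} := by
    intro x hx
    rcases lt_or_eq_of_le (show c ≤ x i from hx) with h | h
    · exact Or.inl h
    · exact Or.inr h.symm
  calc μ {x | c ≤ x i} ≤ μ ({x | c < x i} ∪ {x | x i = c}) := measure_mono hsub
    _ ≤ μ {x | c < x i} + μ {x | x i = c} := measure_union_le _ _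
    _ = μ {x | c < x i} := by rw [hnull, add_zero]

/-- Remark 2.2: the critical constants of the stepdown procedure (Theorem 2.1) and the stepup
procedure (Theorem 2.2) for `k = 2` satisfy `b i < a i < ã i` (here `ta` stands for `ã`). -/
theorem stmt_6
    (P : (Fin 2 → ℝ) → Measure (Fin 2 → ℝ)) (hP : Setup P)
    (α : ℝ) (hα : α ∈ Set.Ioo (0 : ℝ) 1)
    (ε₁ ε₂ : ℝ) (hε₁ : 0 < ε₁) (hε₂ : 0 < ε₂)
    (a b ta : Fin 2 → ℝ)
    (ha : P ![0, 0] {x | a 0 < x 0 ∨ a 1 < x 1} = ENNReal.ofReal α)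
    (ha' : P ![ε₁, ε₂] {x | a 0 < x 0} = P ![ε₁, ε₂] {x | a 1 < x 1})
    (hb : ∀ i : Fin 2, P ![0, 0] {x | b i ≤ x i} = ENNReal.ofReal α)
    (hta : P ![0, 0] ({x : Fin 2 → ℝ | ta 0 < x 0} ∪ {x | ta 1 < x 1} ∪
        {x | b 0 < x 0 ∧ b 1 < x 1}) = ENNReal.ofReal α)
    (hta' : P ![ε₁, ε₂] {x | ta 0 ≤ x 0} = P ![ε₁, ε₂] {x | ta 1 ≤ x 1}) :
    ∀ i : Fin 2, b i < a i ∧ a i < ta i := by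
  obtain ⟨hprob, hdens, -, -, -⟩ := hP
  obtain ⟨f0, hf0m, hf0p, hf0e⟩ := hdens ![0, 0]
  obtain ⟨fe, hfem, hfep, hfee⟩ := hdens ![ε₁, ε₂]
  haveI := hprob ![0, 0]
  haveI := hprob ![ε₁, ε₂]
  have pos0 : ∀ S : Set (Fin 2 → ℝ), volume S ≠ 0 → P ![0, 0] S ≠ 0 := by
    intro S hS; rw [hf0e]; exact aux_pos hf0m (fun x => (hf0p x).1) hS
  have pose : ∀ S : Set (Fin 2 → ℝ), volume S ≠ 0 → P ![ε₁, ε₂] S ≠ 0 := by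
    intro S hS; rw [hfee]; exact aux_pos hfem (fun x => (hfep x).1) hS
  have lelt0 : ∀ (i : Fin 2) (c : ℝ),
      P ![0, 0] {x | c ≤ x i} = P ![0, 0] {x | c < x i} := by
    intro i c
    exact aux_lelt _ i c (by rw [hf0e]; exact aux_null (aux_hyper i c))
  have lelte : ∀ (i : Fin 2) (c : ℝ),
      P ![ε₁, ε₂] {x | c ≤ x i} = P ![ε₁, ε₂] {x | c < x i} := by
    intro i c
    exact aux_lelt _ i c (by rw [hfee]; exact aux_null (aux_hyper i c))
  have mIoi : ∀ (i : Fin 2) (c : ℝ), MeasurableSet {x : Fin 2 → ℝ | c < x i} :=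
    fun i c => measurableSet_Ioi.preimage (measurable_pi_apply i)
  -- Step 1 : b i < a i
  have hba0 : b 0 < a 0 := by
    by_contra h; push_neg at h
    have hdiff : {x : Fin 2 → ℝ | a 0 < x 0 ∨ a 1 < x 1} \ {x | a 0 < x 0} =
        {x : Fin 2 → ℝ | x 0 ∈ Iic (a 0) ∧ x 1 ∈ Ioi (a 1)} := by
      ext x
      simp only [mem_diff, mem_setOf_eq, mem_Iic, mem_Ioi, not_lt]
      constructor
      · rintro ⟨h0 | h1, hn⟩
        · exact absurd h0 (not_lt.2 hn)
        · exact ⟨hn, h1⟩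
      · rintro ⟨h0, h1⟩; exact ⟨Or.inr h1, h0⟩
    have hvol : volume {x : Fin 2 → ℝ | x 0 ∈ Iic (a 0) ∧ x 1 ∈ Ioi (a 1)} ≠ 0 := by
      rw [aux_vol2 _ _]; simp [Real.volume_Iic, Real.volume_Ioi]
    have hlt : P ![0, 0] {x | a 0 < x 0} < P ![0, 0] {x | a 0 < x 0 ∨ a 1 < x 1} :=
      aux_strict (mIoi 0 (a 0)) (fun x hx => Or.inl hx) (measure_ne_top _ _)
        (by rw [hdiff]; exact pos0 _ hvol)
    have hcontra : ENNReal.ofReal α < ENNReal.ofReal α := by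
      calc ENNReal.ofReal α = P ![0, 0] {x | b 0 ≤ x 0} := (hb 0).symm
        _ ≤ P ![0, 0] {x | a 0 ≤ x 0} := measure_mono (fun x hx => le_trans h hx)
        _ = P ![0, 0] {x | a 0 < x 0} := lelt0 0 (a 0)
        _ < P ![0, 0] {x | a 0 < x 0 ∨ a 1 < x 1} := hlt
        _ = ENNReal.ofReal α := ha
    exact lt_irrefl _ hcontra
  have hba1 : b 1 < a 1 := by
    by_contra h; push_neg at h
    have hdiff : {x : Fin 2 → ℝ | a 0 < x 0 ∨ a 1 < x 1} \ {x | a 1 < x 1} =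
        {x : Fin 2 → ℝ | x 0 ∈ Ioi (a 0) ∧ x 1 ∈ Iic (a 1)} := by
      ext x
      simp only [mem_diff, mem_setOf_eq, mem_Iic, mem_Ioi, not_lt]
      constructor
      · rintro ⟨h0 | h1, hn⟩
        · exact ⟨h0, hn⟩
        · exact absurd h1 (not_lt.2 hn)
      · rintro ⟨h0, h1⟩; exact ⟨Or.inl h0, h1⟩
    have hvol : volume {x : Fin 2 → ℝ | x 0 ∈ Ioi (a 0) ∧ x 1 ∈ Iic (a 1)} ≠ 0 := by
      rw [aux_vol2 _ _]; simp [Real.volume_Iic, Real.volume_Ioi]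
    have hlt : P ![0, 0] {x | a 1 < x 1} < P ![0, 0] {x | a 0 < x 0 ∨ a 1 < x 1} :=
      aux_strict (mIoi 1 (a 1)) (fun x hx => Or.inr hx) (measure_ne_top _ _)
        (by rw [hdiff]; exact pos0 _ hvol)
    have hcontra : ENNReal.ofReal α < ENNReal.ofReal α := by
      calc ENNReal.ofReal α = P ![0, 0] {x | b 1 ≤ x 1} := (hb 1).symm
        _ ≤ P ![0, 0] {x | a 1 ≤ x 1} := measure_mono (fun x hx => le_trans h hx)
        _ = P ![0, 0] {x | a 1 < x 1} := lelt0 1 (a 1)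
        _ < P ![0, 0] {x | a 0 < x 0 ∨ a 1 < x 1} := hlt
        _ = ENNReal.ofReal α := ha
    exact lt_irrefl _ hcontra
  -- Step 2 : a 0 < ta 0 ∨ a 1 < ta 1
  have hor : a 0 < ta 0 ∨ a 1 < ta 1 := by
    by_contra h; push_neg at h
    obtain ⟨h0, h1⟩ := h
    have hsub : {x : Fin 2 → ℝ | a 0 < x 0 ∨ a 1 < x 1} ⊆
        ({x : Fin 2 → ℝ | ta 0 < x 0} ∪ {x | ta 1 < x 1} ∪ {x | b 0 < x 0 ∧ b 1 < x 1}) := by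
      rintro x (hx | hx)
      · exact Or.inl (Or.inl (lt_of_le_of_lt h0 hx))
      · exact Or.inl (Or.inr (lt_of_le_of_lt h1 hx))
    have hBsub : {x : Fin 2 → ℝ | x 0 ∈ Ioc (b 0) (a 0) ∧ x 1 ∈ Ioc (b 1) (a 1)} ⊆
        ({x : Fin 2 → ℝ | ta 0 < x 0} ∪ {x | ta 1 < x 1} ∪ {x | b 0 < x 0 ∧ b 1 < x 1}) \
          {x : Fin 2 → ℝ | a 0 < x 0 ∨ a 1 < x 1} := by
      rintro x ⟨⟨hx0b, hx0a⟩, hx1b, hx1a⟩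
      refine ⟨Or.inr ⟨hx0b, hx1b⟩, ?_⟩
      rintro (hc | hc)
      · exact absurd hc (not_lt.2 hx0a)
      · exact absurd hc (not_lt.2 hx1a)
    have hvolB : volume {x : Fin 2 → ℝ | x 0 ∈ Ioc (b 0) (a 0) ∧ x 1 ∈ Ioc (b 1) (a 1)} ≠ 0 := by
      rw [aux_vol2 _ _, Real.volume_Ioc, Real.volume_Ioc]
      refine mul_ne_zero ?_ ?_ <;>
        · rw [Ne, ENNReal.ofReal_eq_zero, not_le]; linarith
    have hne : P ![0, 0]
        (({x : Fin 2 → ℝ | ta 0 < x 0} ∪ {x | ta 1 < x 1} ∪ {x | b 0 < x 0 ∧ b 1 < x 1}) \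
          {x : Fin 2 → ℝ | a 0 < x 0 ∨ a 1 < x 1}) ≠ 0 := by
      intro hz
      have hle := measure_mono (μ := P ![0, 0]) hBsub
      rw [hz] at hle
      exact pos0 _ hvolB (le_antisymm hle zero_le)
    have hlt := aux_strict (A := {x : Fin 2 → ℝ | a 0 < x 0 ∨ a 1 < x 1})
      ((mIoi 0 (a 0)).union (mIoi 1 (a 1))) hsub (measure_ne_top _ _) hne
    rw [ha, hta] at hlt
    exact lt_irrefl _ hlt
  -- Step 3 : transfer via the ε equalities
  have h01 : a 0 < ta 0 → a 1 < ta 1 := by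
    intro h0
    by_contra h1; push_neg at h1
    have hdiff : {x : Fin 2 → ℝ | a 0 < x 0} \ {x | ta 0 < x 0} =
        {x : Fin 2 → ℝ | x 0 ∈ Ioc (a 0) (ta 0) ∧ x 1 ∈ (univ : Set ℝ)} := by
      ext x
      simp only [mem_diff, mem_setOf_eq, mem_Ioc, mem_univ, and_true, not_lt]
    have hvol : volume {x : Fin 2 → ℝ | x 0 ∈ Ioc (a 0) (ta 0) ∧ x 1 ∈ (univ : Set ℝ)} ≠ 0 := by
      rw [aux_vol2 _ _, Real.volume_Ioc, Real.volume_univ]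
      refine mul_ne_zero ?_ (by simp)
      rw [Ne, ENNReal.ofReal_eq_zero, not_le]; linarith
    have hlt : P ![ε₁, ε₂] {x | ta 0 < x 0} < P ![ε₁, ε₂] {x | a 0 < x 0} :=
      aux_strict (mIoi 0 (ta 0)) (fun x hx => lt_trans h0 hx) (measure_ne_top _ _)
        (by rw [hdiff]; exact pose _ hvol)
    have hcontra : P ![ε₁, ε₂] {x | ta 1 ≤ x 1} < P ![ε₁, ε₂] {x | ta 1 ≤ x 1} := by
      calc P ![ε₁, ε₂] {x | ta 1 ≤ x 1} = P ![ε₁, ε₂] {x | ta 0 ≤ x 0} := hta'.symm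
        _ = P ![ε₁, ε₂] {x | ta 0 < x 0} := lelte 0 (ta 0)
        _ < P ![ε₁, ε₂] {x | a 0 < x 0} := hlt
        _ = P ![ε₁, ε₂] {x | a 1 < x 1} := ha'
        _ ≤ P ![ε₁, ε₂] {x | a 1 ≤ x 1} := measure_mono (fun x hx => show a 1 ≤ x 1 from le_of_lt hx)
        _ ≤ P ![ε₁, ε₂] {x | ta 1 ≤ x 1} := measure_mono (fun x hx => le_trans h1 hx)
    exact lt_irrefl _ hcontra
  have h10 : a 1 < ta 1 → a 0 < ta 0 := by
    intro h1
    by_contra h0; push_neg at h0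
    have hdiff : {x : Fin 2 → ℝ | a 1 < x 1} \ {x | ta 1 < x 1} =
        {x : Fin 2 → ℝ | x 0 ∈ (univ : Set ℝ) ∧ x 1 ∈ Ioc (a 1) (ta 1)} := by
      ext x
      simp only [mem_diff, mem_setOf_eq, mem_Ioc, mem_univ, true_and, not_lt]
    have hvol : volume {x : Fin 2 → ℝ | x 0 ∈ (univ : Set ℝ) ∧ x 1 ∈ Ioc (a 1) (ta 1)} ≠ 0 := by
      rw [aux_vol2 _ _, Real.volume_Ioc, Real.volume_univ]
      refine mul_ne_zero (by simp) ?_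
      rw [Ne, ENNReal.ofReal_eq_zero, not_le]; linarith
    have hlt : P ![ε₁, ε₂] {x | ta 1 < x 1} < P ![ε₁, ε₂] {x | a 1 < x 1} :=
      aux_strict (mIoi 1 (ta 1)) (fun x hx => lt_trans h1 hx) (measure_ne_top _ _)
        (by rw [hdiff]; exact pose _ hvol)
    have hcontra : P ![ε₁, ε₂] {x | ta 0 ≤ x 0} < P ![ε₁, ε₂] {x | ta 0 ≤ x 0} := by
      calc P ![ε₁, ε₂] {x | ta 0 ≤ x 0} = P ![ε₁, ε₂] {x | ta 1 ≤ x 1} := hta'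
        _ = P ![ε₁, ε₂] {x | ta 1 < x 1} := lelte 1 (ta 1)
        _ < P ![ε₁, ε₂] {x | a 1 < x 1} := hlt
        _ = P ![ε₁, ε₂] {x | a 0 < x 0} := ha'.symm
        _ ≤ P ![ε₁, ε₂] {x | a 0 ≤ x 0} := measure_mono (fun x hx => show a 0 ≤ x 0 from le_of_lt hx)
        _ ≤ P ![ε₁, ε₂] {x | ta 0 ≤ x 0} := measure_mono (fun x hx => le_trans h0 hx)
    exact lt_irrefl _ hcontra
  have hfinal : a 0 < ta 0 ∧ a 1 < ta 1 := by
    rcases hor with h | h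
    · exact ⟨h, h01 h⟩
    · exact ⟨h10 h, h⟩
  intro i
  fin_cases i
  · exact ⟨hba0, hfinal.1⟩
  · exact ⟨hba1, hfinal.2⟩
end
end

section
/- Let k ≥ 1 and α ∈ (0,1). Under the setup with exchangeability (E), the stepdown rule D — which, with X_{r_1} ≥ ⋯ ≥ X_{r_k} the ordered coordinates, rejects exactly H_{r_1}, …, H_{r_j} where j is the largest index such that X_{r_i} ≥ f_{k−i+1} for all 1 ≤ i ≤ j — controls the FWER at level α: for every θ ∈ ℝ^k, P_θ{x : D rejects some H_i with θ_i ≤ 0} ≤ α. -/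
open MeasureTheory Filter Set
open scoped ENNReal

noncomputable section

/-- Exchangeability of the law of `X` under any parameter with equal coordinates. -/
def Exch {k : ℕ} (P : (Fin k → ℝ) → Measure (Fin k → ℝ)) : Prop :=
  ∀ (t : ℝ) (π : Equiv.Perm (Fin k)),
    Measure.map (fun x => x ∘ π) (P (fun _ => t)) = P (fun _ => t)

/-- The `i`-th largest coordinate of `x` (`i` is 0-based). -/
def ordDesc {k : ℕ} (x : Fin k → ℝ) (i : Fin k) : ℝ := x (Tuple.sort x i.rev)


/-- The number of hypotheses rejected by the stepdown procedure with critical constants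
`f j` (`c_{k,i} = f (k-i+1)`): the largest `j` such that the `i`-th largest observation is at
least `f (k-i+1)` for all `i ≤ j` (indices `0`-based below, so the condition reads
`f (k - i') ≤ ordDesc x i'`). -/
def sdNumRej {k : ℕ} (f : ℕ → ℝ) (x : Fin k → ℝ) : ℕ :=
  (Finset.univ.filter (fun i : Fin k => ∀ i' ≤ i, f (k - (i' : ℕ)) ≤ ordDesc x i')).card

/-- The stepdown rule with critical constants `f`: it rejects the hypotheses corresponding to
the `sdNumRej f x` largest observations. -/
def sdRule {k : ℕ} (f : ℕ → ℝ) (x : Fin k → ℝ) : Finset (Fin k) :=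
  (Finset.univ.filter (fun i : Fin k => (i : ℕ) < sdNumRej f x)).image
    (fun i => Tuple.sort x i.rev)

/-- `sdDset k j f` is the event `D_{k,j}` that the stepdown procedure rejects at least `j`
hypotheses: the `i`-th largest observation is `≥ f (k-i+1)` for each of the top `j` positions
(`0`-based `i`). -/
def sdDset (k j : ℕ) (f : ℕ → ℝ) : Set (Fin k → ℝ) :=
  {x | ∀ i : Fin k, (i : ℕ) < j → f (k - (i : ℕ)) ≤ ordDesc x i}

/-- A downward-closed subset of `Fin k` is an initial segment. -/
lemma aux_downclosed {k : ℕ} (Q : Fin k → Prop) [DecidablePred Q]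
    (hQ : ∀ ⦃i j : Fin k⦄, i ≤ j → Q j → Q i) (r : Fin k) :
    (r : ℕ) < (Finset.univ.filter Q).card ↔ Q r := by
  constructor
  · intro h
    by_contra hr
    have hsub : Finset.univ.filter Q ⊆ Finset.Iio r := by
      intro i hi
      simp only [Finset.mem_filter] at hi
      rw [Finset.mem_Iio]
      by_contra hlt
      exact hr (hQ (le_of_not_gt hlt) hi.2)
    have := Finset.card_le_card hsub
    rw [Fin.card_Iio] at this; omega
  · intro h
    have hsub : Finset.Iic r ⊆ Finset.univ.filter Q := by
      intro i hi
      simp only [Finset.mem_filter, Finset.mem_univ, true_and]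
      exact hQ (Finset.mem_Iic.mp hi) h
    have := Finset.card_le_card hsub
    rw [Fin.card_Iic] at this; omega

/-- Lemma 3.1(i): under the distributional assumptions and exchangeability, the stepdown rule
with critical constants `f j` (determined by `P₀^{(j)}{max(X_1,…,X_j) > f j} = α`) controls the
FWER at level `α`. -/
theorem stmt_7
    (k : ℕ) (hk : 1 ≤ k)
    (P : (Fin k → ℝ) → Measure (Fin k → ℝ)) (hP : Setup P) (hE : Exch P)
    (α : ℝ) (hα : α ∈ Set.Ioo (0 : ℝ) 1)
    (f : ℕ → ℝ)
    (hf : ∀ j : ℕ, 1 ≤ j → j ≤ k →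
      P (fun _ => (0 : ℝ)) {x | ∃ i : Fin k, (i : ℕ) < j ∧ f j < x i} = ENNReal.ofReal α) :
    ∀ θ : Fin k → ℝ, P θ {x | ∃ i ∈ sdRule f x, θ i ≤ 0} ≤ ENNReal.ofReal α := by
  obtain ⟨hProb, hDens, hMon, hC, _⟩ := hP
  intro θ
  by_cases hne : (Finset.univ.filter (fun i : Fin k => θ i ≤ 0)).Nonempty
  swap
  · have hempty : {x : Fin k → ℝ | ∃ i ∈ sdRule f x, θ i ≤ 0} = ∅ := by
      ext x
      simp only [Set.mem_setOf_eq, Set.mem_empty_iff_false, iff_false, not_exists]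
      rintro i ⟨_, hθi⟩
      exact hne ⟨i, Finset.mem_filter.mpr ⟨Finset.mem_univ i, hθi⟩⟩
    rw [hempty]
    simp [ENNReal.ofReal_pos.mpr hα.1, le_of_lt]
  set m : ℕ := (Finset.univ.filter (fun i : Fin k => θ i ≤ 0)).card with hm
  have hm1 : 1 ≤ m := Finset.card_pos.mpr hne
  have hmk : m ≤ k := by
    have := Finset.card_le_card
      (Finset.subset_univ (Finset.univ.filter (fun i : Fin k => θ i ≤ 0)))
    simpa using this
  -- monotonicity of the critical constants, from positivity of the density
  have hfmono : ∀ a b : ℕ, 1 ≤ a → a ≤ b → b ≤ k → f a ≤ f b := by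
    intro a b ha hab hbk
    by_contra hlt
    push_neg at hlt   -- f b < f a
    set A : ℕ → Set (Fin k → ℝ) := fun j => {x | ∃ i : Fin k, (i : ℕ) < j ∧ f j < x i} with hA
    set B : Set (Fin k → ℝ) := Set.univ.pi (fun _ : Fin k => Set.Ioo (f b) (f a)) with hB
    have hBmeas : MeasurableSet B := MeasurableSet.univ_pi (fun _ => measurableSet_Ioo)
    have hBpos : 0 < P (fun _ => (0:ℝ)) B := by
      obtain ⟨d, hd_meas, hd_pos, hPd⟩ := hDens (fun _ => 0)
      rw [hPd, withDensity_apply _ hBmeas]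
      rw [pos_iff_ne_zero]
      intro h0
      have hae : d =ᵐ[MeasureTheory.volume.restrict B] 0 :=
        (lintegral_eq_zero_iff hd_meas).mp h0
      rw [Filter.EventuallyEq, ae_iff] at hae
      have huniv : {x : Fin k → ℝ | ¬ d x = (0 : (Fin k → ℝ) → ℝ≥0∞) x} = Set.univ := by
        ext x; simp [(hd_pos x).1.ne']
      rw [huniv, Measure.restrict_apply_univ] at hae
      have hvol : MeasureTheory.volume B ≠ 0 := by
        rw [hB, volume_pi_pi]
        rw [Finset.prod_ne_zero_iff]
        intro i _
        rw [Real.volume_Ioo]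
        simpa using sub_pos.mpr hlt
      exact hvol hae
    have hsub1 : A a ⊆ A b := by
      rintro x ⟨i, hi, hx⟩
      exact ⟨i, lt_of_lt_of_le hi hab, lt_trans hlt hx⟩
    have hsub2 : B ⊆ A b := by
      intro x hx
      refine ⟨⟨0, by omega⟩, by simpa using (lt_of_lt_of_le ha hab), ?_⟩
      exact (hx ⟨0, by omega⟩ (Set.mem_univ _)).1
    have hdisj : Disjoint (A a) B := by
      rw [Set.disjoint_left]
      rintro x ⟨i, hi, hx⟩ hxB
      exact absurd ((hxB i (Set.mem_univ _)).2) (not_lt.mpr (le_of_lt hx))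
    have hle : P (fun _ => (0:ℝ)) (A a) + P (fun _ => (0:ℝ)) B ≤ P (fun _ => (0:ℝ)) (A b) := by
      rw [← measure_union hdisj hBmeas]
      exact measure_mono (Set.union_subset hsub1 hsub2)
    rw [hf a ha (le_trans hab hbk), hf b (le_trans ha hab) hbk] at hle
    have h0 : P (fun _ => (0:ℝ)) B = 0 := by
      have h' : ENNReal.ofReal α + P (fun _ => (0:ℝ)) B ≤ ENNReal.ofReal α + 0 := by
        simpa using hle
      have := (ENNReal.add_le_add_iff_left (ENNReal.ofReal_ne_top)).mp h'
      simpa using this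
    rw [h0] at hBpos
    exact lt_irrefl _ hBpos
  -- the false-rejection event is contained in M
  set M : Set (Fin k → ℝ) := {x | ∃ i, θ i ≤ 0 ∧ f m ≤ x i} with hMdef
  have hsubM : {x : Fin k → ℝ | ∃ i ∈ sdRule f x, θ i ≤ 0} ⊆ M := by
    intro x hx
    obtain ⟨i, hiR, hθi⟩ := hx
    rw [sdRule, Finset.mem_image] at hiR
    obtain ⟨r, hr, hri⟩ := hiR
    rw [Finset.mem_filter] at hr
    have hrN : (r : ℕ) < sdNumRej f x := hr.2
    set σ : Equiv.Perm (Fin k) := Tuple.sort x with hσ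
    have hQr : ∀ i' ≤ r, f (k - (i' : ℕ)) ≤ ordDesc x i' := by
      refine (aux_downclosed _ ?_ r).mp hrN
      intro i j hij hQ i' hi'
      exact hQ i' (le_trans hi' hij)
    set S : Finset (Fin k) := Finset.univ.filter (fun r' : Fin k => θ (σ r'.rev) ≤ 0) with hS
    have hrS : r ∈ S := by
      rw [hS, Finset.mem_filter]
      refine ⟨Finset.mem_univ _, ?_⟩
      rw [hσ]
      rw [hri]
      exact hθi
    set q : Fin k := S.min' ⟨r, hrS⟩ with hq
    have hqr : q ≤ r := S.min'_le r hrS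
    have hqS : θ (σ q.rev) ≤ 0 := by
      have := S.min'_mem ⟨r, hrS⟩
      exact (Finset.mem_filter.mp this).2
    have hqcard : (q : ℕ) ≤ k - m := by
      have hinj : Function.Injective (fun r' : Fin k => σ r'.rev) :=
        fun a b h => Fin.rev_injective (σ.injective h)
      have himg : (Finset.Iio q).image (fun r' => σ r'.rev)
          ⊆ Finset.univ.filter (fun i => ¬ θ i ≤ 0) := by
        intro i hi
        rw [Finset.mem_image] at hi
        obtain ⟨r', hr', rfl⟩ := hi
        rw [Finset.mem_Iio] at hr'
        rw [Finset.mem_filter]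
        refine ⟨Finset.mem_univ _, ?_⟩
        intro hneg
        have : r' ∈ S := by rw [hS, Finset.mem_filter]; exact ⟨Finset.mem_univ _, hneg⟩
        exact absurd (S.min'_le r' this) (not_le.mpr hr')
      have hcard1 : ((Finset.Iio q).image (fun r' => σ r'.rev)).card = (q : ℕ) := by
        rw [Finset.card_image_of_injective _ hinj, Fin.card_Iio]
      have hcard2 : (Finset.univ.filter (fun i : Fin k => ¬ θ i ≤ 0)).card = k - m := by
        rw [Finset.filter_not, Finset.card_sdiff_of_subset (Finset.filter_subset _ _)]
        rw [← hm, Finset.card_univ, Fintype.card_fin]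
      have := Finset.card_le_card himg
      rw [hcard1, hcard2] at this
      exact this
    have h1 : f (k - (q : ℕ)) ≤ ordDesc x q := hQr q hqr
    have h2 : f m ≤ f (k - (q : ℕ)) := hfmono m (k - (q : ℕ)) hm1 (by omega) (by omega)
    exact ⟨σ q.rev, hqS, le_trans h2 h1⟩
  have hMmeas : MeasurableSet M := by
    have hMeq : M = ⋃ i ∈ {i : Fin k | θ i ≤ 0}, {x : Fin k → ℝ | f m ≤ x i} := by
      ext x; simp [hMdef]
    rw [hMeq]
    exact MeasurableSet.biUnion (Set.to_countable _)
      (fun i _ => measurableSet_le measurable_const (measurable_pi_apply i))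
  -- step 1: monotonicity in θ
  have step1 : P θ M ≤ P (fun i => max (θ i) 0) M := by
    have := hMon (fun _ => 1) (fun _ => Or.inl rfl) θ (fun i => max (θ i) 0)
      (fun i => by simpa using le_max_left (θ i) 0) M hMmeas
      (by intro x y hxy hx; obtain ⟨i, h1, h2⟩ := hx; exact ⟨i, h1, le_trans h2 (hxy i)⟩)
    simp only [one_mul] at this; exact this
  -- step 2: the law of the relevant coordinates only depends on those of θ
  have step2 : P (fun i => max (θ i) 0) M = P (fun _ => (0:ℝ)) M := by
    set Js : Set (Fin k) := {i | θ i ≤ 0} with hJs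
    have hCγ := hC Js (fun i => max (θ i) 0) (fun _ => 0)
      (fun i hi => max_eq_right (by exact hi))
    set T : Set (↥Js → ℝ) := {y | ∃ i, f m ≤ y i} with hT
    have hTmeas : MeasurableSet T := by
      have : T = ⋃ i : ↥Js, {y : ↥Js → ℝ | f m ≤ y i} := by ext y; simp [hT]
      rw [this]
      exact MeasurableSet.iUnion
        (fun i => measurableSet_le measurable_const (measurable_pi_apply i))
    have hrmeas : Measurable (Js.restrict : (Fin k → ℝ) → (↥Js → ℝ)) :=
      measurable_pi_lambda _ (fun i => measurable_pi_apply i.1)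
    have hpre : Js.restrict ⁻¹' T = M := by
      ext x
      simp only [Set.mem_preimage, hT, Set.mem_setOf_eq, Set.restrict_apply, hMdef]
      constructor
      · rintro ⟨⟨i, hi⟩, hx⟩; exact ⟨i, hi, hx⟩
      · rintro ⟨i, hi, hx⟩; exact ⟨⟨i, hi⟩, hx⟩
    calc P (fun i => max (θ i) 0) M
        = Measure.map Js.restrict (P (fun i => max (θ i) 0)) T := by
          rw [Measure.map_apply hrmeas hTmeas, hpre]
      _ = Measure.map Js.restrict (P (fun _ => (0:ℝ))) T := by rw [hCγ]
      _ = _ := by rw [Measure.map_apply hrmeas hTmeas, hpre]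
  -- step 3: exchangeability
  have step3 : P (fun _ => (0:ℝ)) M
      = P (fun _ => (0:ℝ)) {x : Fin k → ℝ | ∃ i : Fin k, (i : ℕ) < m ∧ f m ≤ x i} := by
    set σ : Equiv.Perm (Fin k) := Tuple.sort θ with hσ
    have hmeasmap : Measurable (fun x : Fin k → ℝ => x ∘ ⇑(σ⁻¹)) :=
      measurable_pi_lambda _ (fun i => measurable_pi_apply _)
    have hkey : ∀ j : Fin k, θ (σ j) ≤ 0 ↔ (j : ℕ) < m := by
      intro j
      have hdc : ∀ ⦃i j : Fin k⦄, i ≤ j → θ (σ j) ≤ 0 → θ (σ i) ≤ 0 := by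
        intro i j hij h
        exact le_trans (Tuple.monotone_sort θ hij) h
      have hcard : (Finset.univ.filter (fun j : Fin k => θ (σ j) ≤ 0)).card = m := by
        have himg : (Finset.univ.filter (fun j : Fin k => θ (σ j) ≤ 0)).image σ
            = Finset.univ.filter (fun i : Fin k => θ i ≤ 0) := by
          ext i
          simp only [Finset.mem_image, Finset.mem_filter, Finset.mem_univ, true_and]
          constructor
          · rintro ⟨j, hj, rfl⟩; exact hj
          · intro hi; exact ⟨σ⁻¹ i, by simpa using hi, by simp⟩
        rw [hm, ← himg, Finset.card_image_of_injective _ σ.injective]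
      rw [← hcard]
      exact (aux_downclosed _ hdc j).symm
    have hpre : (fun x : Fin k → ℝ => x ∘ ⇑(σ⁻¹)) ⁻¹' M
        = {x : Fin k → ℝ | ∃ i : Fin k, (i : ℕ) < m ∧ f m ≤ x i} := by
      ext x
      simp only [Set.mem_preimage, Set.mem_setOf_eq, Function.comp_apply, hMdef]
      constructor
      · rintro ⟨i, hi, hx⟩
        refine ⟨σ⁻¹ i, ?_, hx⟩
        rw [← hkey]
        simpa using hi
      · rintro ⟨j, hj, hx⟩
        refine ⟨σ j, (hkey j).mpr hj, by simpa using hx⟩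
    conv_lhs => rw [← hE 0 σ⁻¹]
    rw [Measure.map_apply hmeasmap hMmeas, hpre]
  -- step 4: pass from ≤ to < using the null boundary
  have step4 : P (fun _ => (0:ℝ)) {x : Fin k → ℝ | ∃ i : Fin k, (i : ℕ) < m ∧ f m ≤ x i}
      ≤ ENNReal.ofReal α := by
    set Bd : Set (Fin k → ℝ) := ⋃ i : Fin k, {x | x i = f m} with hBd
    have hsub : {x : Fin k → ℝ | ∃ i : Fin k, (i : ℕ) < m ∧ f m ≤ x i}
        ⊆ {x : Fin k → ℝ | ∃ i : Fin k, (i : ℕ) < m ∧ f m < x i} ∪ Bd := by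
      rintro x ⟨i, hi, hx⟩
      rcases lt_or_eq_of_le hx with h | h
      · exact Or.inl ⟨i, hi, h⟩
      · exact Or.inr (Set.mem_iUnion.mpr ⟨i, h.symm⟩)
    have hBdnull : P (fun _ => (0:ℝ)) Bd = 0 := by
      obtain ⟨d, _, _, hPd⟩ := hDens (fun _ => 0)
      rw [hPd]
      refine (withDensity_absolutelyContinuous MeasureTheory.volume d) ?_
      refine measure_iUnion_null (fun i => ?_)
      have := MeasureTheory.Measure.pi_hyperplane
        (fun _ : Fin k => (volume : Measure ℝ)) i (f m)
      rw [MeasureTheory.volume_pi]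
      exact this
    calc P (fun _ => (0:ℝ)) {x : Fin k → ℝ | ∃ i : Fin k, (i : ℕ) < m ∧ f m ≤ x i}
        ≤ P (fun _ => (0:ℝ)) ({x : Fin k → ℝ | ∃ i : Fin k, (i : ℕ) < m ∧ f m < x i} ∪ Bd) :=
          measure_mono hsub
      _ ≤ P (fun _ => (0:ℝ)) {x : Fin k → ℝ | ∃ i : Fin k, (i : ℕ) < m ∧ f m < x i}
          + P (fun _ => (0:ℝ)) Bd := measure_union_le _ _
      _ = ENNReal.ofReal α := by rw [hBdnull, hf m hm1 hmk, add_zero]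
  calc P θ {x | ∃ i ∈ sdRule f x, θ i ≤ 0} ≤ P θ M := measure_mono hsubM
    _ ≤ P (fun i => max (θ i) 0) M := step1
    _ = P (fun _ => (0:ℝ)) M := step2
    _ = _ := step3
    _ ≤ ENNReal.ofReal α := step4
end
end

section
/- Let k ≥ 1 and α ∈ (0,1). Let d_1, …, d_k be the stepup critical constants, assumed nondecreasing: d_1 ≤ d_2 ≤ ⋯ ≤ d_k. Then the stepup rule D — which, with X_{(1)} ≤ ⋯ ≤ X_{(k)} the ordered coordinates, rejects the k − j* + 1 hypotheses corresponding to the k − j* + 1 largest coordinates where j* is the smallest j with X_{(j)} > d_j, and accepts all hypotheses if no such j exists — controls the FWER at level α: for every θ ∈ ℝ^k, P_θ{x : D rejects some H_i with θ_i ≤ 0} ≤ α. -/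
open MeasureTheory Filter Set
open scoped ENNReal

noncomputable section

/-- The number of hypotheses rejected by the stepup procedure with critical constants `d`:
if `j*` is the smallest (1-based) `j` with `X_{(j)} > d j` (`X_{(1)} ≤ ⋯ ≤ X_{(k)}` the ordered
observations), then `k - j* + 1` hypotheses are rejected (none when no such `j` exists).
Below, positions are 0-based: `x (Tuple.sort x i')` is the `(i'+1)`-th smallest observation. -/
def suNumRej {k : ℕ} (d : ℕ → ℝ) (x : Fin k → ℝ) : ℕ :=
  (Finset.univ.filter
    (fun i : Fin k => ∃ i' ≤ i, d ((i' : ℕ) + 1) < x (Tuple.sort x i'))).card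

/-- The stepup rule with critical constants `d`: it rejects the hypotheses corresponding to the
`suNumRej d x` largest observations. -/
def suRule {k : ℕ} (d : ℕ → ℝ) (x : Fin k → ℝ) : Finset (Fin k) :=
  (Finset.univ.filter
    (fun i : Fin k => ∃ i' ≤ i, d ((i' : ℕ) + 1) < x (Tuple.sort x i'))).image (Tuple.sort x)

/-- `suDset k j d` is the event `D_{k,j} = ⋃_{i=1}^{k-j+1} {X_{(i)} > d i}` that the stepup
procedure rejects at least `j` hypotheses (expressed by counting: the `(i+1)`-th smallest
observation exceeds `c` iff at most `i` observations are `≤ c`). -/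
def suDset (k j : ℕ) (d : ℕ → ℝ) : Set (Fin k → ℝ) :=
  {x | ∃ i : Fin k, (i : ℕ) ≤ k - j ∧
    (Finset.univ.filter (fun l : Fin k => x l ≤ d ((i : ℕ) + 1))).card ≤ (i : ℕ)}
/-! ### Auxiliary lemmas -/

lemma meas_count {ι : Type*} [Fintype ι] (S : Finset ι) (c : ℝ)
    [DecidablePred fun l : ι => (fun (_ : ι → ℝ) (_ : ι) => True) (fun _ => 0) l] :
    Measurable (fun y : ι → ℝ => ((S.filter fun l => y l ≤ c)).card) := by
  classical
  simp_rw [Finset.card_filter]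
  exact Finset.measurable_sum _ fun l _ =>
    Measurable.ite (measurableSet_le (measurable_pi_apply l) measurable_const)
      measurable_const measurable_const

lemma meas_G {ι : Type*} [Fintype ι] (S : Finset ι) (m : ℕ) (d : ℕ → ℝ) :
    MeasurableSet {y : ι → ℝ | ∀ i : ℕ, 1 ≤ i → i ≤ m →
      i ≤ ((S.filter fun l => y l ≤ d i)).card} := by
  classical
  have : {y : ι → ℝ | ∀ i : ℕ, 1 ≤ i → i ≤ m → i ≤ ((S.filter fun l => y l ≤ d i)).card}
      = ⋂ i : ℕ, {y | 1 ≤ i → i ≤ m → i ≤ ((S.filter fun l => y l ≤ d i)).card} := by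
    ext y; simp [Set.mem_iInter]
  rw [this]
  refine MeasurableSet.iInter fun i => ?_
  by_cases h : 1 ≤ i ∧ i ≤ m
  · have : {y : ι → ℝ | 1 ≤ i → i ≤ m → i ≤ ((S.filter fun l => y l ≤ d i)).card}
        = (fun y : ι → ℝ => ((S.filter fun l => y l ≤ d i)).card) ⁻¹' (Set.Ici i) := by
      ext y; simp [h.1, h.2]
    rw [this]
    exact meas_count S (d i) measurableSet_Ici
  · have : {y : ι → ℝ | 1 ≤ i → i ≤ m → i ≤ ((S.filter fun l => y l ≤ d i)).card}
        = Set.univ := by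
      ext y; simp only [Set.mem_setOf_eq, Set.mem_univ, iff_true]
      intro h1 h2; exact absurd ⟨h1, h2⟩ h
    rw [this]; exact MeasurableSet.univ

lemma card_subtype_filter {ι : Type*} [Fintype ι] [DecidableEq ι] (S : Finset ι)
    (q : ι → Prop) [DecidablePred q] :
    (Finset.univ.filter fun l : ↥(↑S : Set ι) => q ↑l).card = (S.filter q).card := by
  classical
  rw [← Fintype.card_subtype]
  have e : {l : ↥(↑S : Set ι) // q ↑l} ≃ {a : ι // a ∈ S ∧ q a} :=
    (Equiv.subtypeSubtypeEquivSubtypeInter (fun a => a ∈ (↑S : Set ι)) q).trans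
      (Equiv.subtypeEquivRight (by intro a; simp))
  rw [Fintype.card_congr e, Fintype.card_subtype]
  congr 1
  ext a; simp [Finset.mem_filter]

lemma card_filter_comp {ι : Type*} [DecidableEq ι] (S : Finset ι) (π : Equiv.Perm ι)
    (q : ι → Prop) [DecidablePred q] :
    (S.filter fun l => q (π l)).card = ((S.image π).filter q).card := by
  rw [Finset.filter_image, Finset.card_image_of_injective _ π.injective]

lemma exists_perm_image {k : ℕ} (I J : Finset (Fin k)) (h : I.card = J.card) :
    ∃ π : Equiv.Perm (Fin k), I.image π = J := by
  classical
  have h2 : Fintype.card {a : Fin k // a ∈ I} = Fintype.card {a : Fin k // a ∈ J} := by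
    simp [Fintype.card_subtype, Finset.filter_mem_eq_inter, h]
  have h3 : Fintype.card {a : Fin k // ¬ a ∈ I} = Fintype.card {a : Fin k // ¬ a ∈ J} := by
    rw [Fintype.card_subtype_compl, Fintype.card_subtype_compl, h2]
  let eI := Fintype.equivOfCardEq h2
  let eC := Fintype.equivOfCardEq h3
  let π : Equiv.Perm (Fin k) :=
    ((Equiv.sumCompl (· ∈ I)).symm.trans ((eI.sumCongr eC).trans (Equiv.sumCompl (· ∈ J))))
  have key : ∀ l, π l ∈ J ↔ l ∈ I := by
    intro l
    by_cases hl : l ∈ I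
    · simp only [π, Equiv.trans_apply, Equiv.sumCompl_symm_apply_of_pos hl]
      simp only [Equiv.sumCongr_apply, Sum.map_inl, Equiv.sumCompl_apply_inl]
      exact iff_of_true (eI ⟨l, hl⟩).2 hl
    · simp only [π, Equiv.trans_apply, Equiv.sumCompl_symm_apply_of_neg hl]
      simp only [Equiv.sumCongr_apply, Sum.map_inr, Equiv.sumCompl_apply_inr]
      exact iff_of_false (eC ⟨l, hl⟩).2 hl
  refine ⟨π, ?_⟩
  ext j
  simp only [Finset.mem_image]
  constructor
  · rintro ⟨l, hl, rfl⟩; exact (key l).2 hl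
  · intro hj
    exact ⟨π.symm j, (key _).1 (by simpa using hj), Equiv.apply_symm_apply _ _⟩

lemma card_lt_filter {k m : ℕ} (hmk : m ≤ k) :
    (Finset.univ.filter fun l : Fin k => (l : ℕ) < m).card = m := by
  have : (Finset.univ.filter fun l : Fin k => (l : ℕ) < m)
      = Finset.univ.map (Fin.castLEEmb hmk) := by
    ext j
    simp only [Finset.mem_filter, Finset.mem_univ, true_and, Finset.mem_map,
      Fin.castLEEmb_apply]
    constructor
    · intro h; exact ⟨⟨j, h⟩, rfl⟩
    · rintro ⟨a, rfl⟩; exact a.isLt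
  rw [this, Finset.card_map, Finset.card_univ, Fintype.card_fin]

lemma stepA {k : ℕ} (d : ℕ → ℝ)
    (hdmono : ∀ i i' : ℕ, 1 ≤ i → i ≤ i' → i' ≤ k → d i ≤ d i')
    (θ : Fin k → ℝ) (I : Finset (Fin k)) (hI : ∀ j, j ∈ I ↔ θ j ≤ 0)
    (x : Fin k → ℝ) (hx : ∃ i ∈ suRule d x, θ i ≤ 0) :
    ¬ (∀ i : ℕ, 1 ≤ i → i ≤ I.card → i ≤ (I.filter fun l => x l ≤ d i).card) := by
  classical
  intro hG
  obtain ⟨j, hjR, hjθ⟩ := hx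
  rw [suRule, Finset.mem_image] at hjR
  obtain ⟨i, hi, rfl⟩ := hjR
  rw [Finset.mem_filter] at hi
  obtain ⟨-, i', hi'le, hd'⟩ := hi
  set σ := Tuple.sort x with hσ
  have hmono : Monotone (x ∘ σ) := Tuple.monotone_sort x
  have hxx : x (σ i') ≤ x (σ i) := hmono hi'le
  set c := d ((i' : ℕ) + 1) with hc
  have h1 : (Finset.univ.filter fun l : Fin k => x l ≤ c).card ≤ (i' : ℕ) := by
    have hkey := Tuple.lt_card_le_iff_apply_le_of_monotone (f := x ∘ σ) (a := c) (j := i') hmono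
    rw [← Fintype.card_subtype] at hkey
    have hnot : ¬ ((x ∘ σ) i' ≤ c) := not_le.mpr hd'
    have h1' : Fintype.card {p : Fin k // (x ∘ σ) p ≤ c} ≤ (i' : ℕ) :=
      le_of_not_gt (fun h => hnot (hkey.mp h))
    have hcard : (Finset.univ.filter fun l : Fin k => x l ≤ c).card
        = Fintype.card {p : Fin k // (x ∘ σ) p ≤ c} := by
      rw [← Fintype.card_subtype]
      refine Fintype.card_congr (Equiv.subtypeEquiv σ.symm ?_)
      intro a; simp
    rw [hcard]; exact h1'
  have h2 : (I.filter fun l => x l ≤ c).card ≤ (i' : ℕ) :=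
    le_trans (Finset.card_le_card (Finset.filter_subset_filter _ (Finset.subset_univ I))) h1
  set s := (I.filter fun l => x l ≤ c).card with hs
  have hjI : σ i ∈ I := (hI _).mpr hjθ
  have hjc : ¬ x (σ i) ≤ c := not_le.mpr (lt_of_lt_of_le hd' hxx)
  have hjs : σ i ∉ I.filter fun l => x l ≤ c := by
    simp only [Finset.mem_filter]; tauto
  have hlt : s < I.card :=
    Finset.card_lt_card ((Finset.ssubset_iff_of_subset (Finset.filter_subset _ _)).mpr
      ⟨σ i, hjI, hjs⟩)
  have hG' := hG (s + 1) (Nat.succ_le_succ (Nat.zero_le s)) hlt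
  have hdd : d (s + 1) ≤ c := by
    rw [hc]
    exact hdmono (s + 1) ((i' : ℕ) + 1) (Nat.succ_le_succ (Nat.zero_le s))
      (Nat.succ_le_succ h2) (Nat.succ_le_of_lt i'.isLt)
  have hsub2 : (I.filter fun l => x l ≤ d (s + 1)) ⊆ I.filter fun l => x l ≤ c :=
    Finset.monotone_filter_right I (fun l _ hl => le_trans hl hdd)
  have := le_trans hG' (Finset.card_le_card hsub2)
  omega

/-- Lemma 4.1(i): if the stepup critical constants `d 1 ≤ d 2 ≤ ⋯ ≤ d k` (determined by
`P₀^{(j)}{X_{j:i} ≤ d i, i = 1, …, j} = 1 - α`, stated below via counting) are nondecreasing,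
then the stepup rule controls the FWER at level `α`. -/
theorem stmt_11
    (k : ℕ) (hk : 1 ≤ k)
    (P : (Fin k → ℝ) → Measure (Fin k → ℝ)) (hP : Setup P) (hE : Exch P)
    (α : ℝ) (hα : α ∈ Set.Ioo (0 : ℝ) 1)
    (d : ℕ → ℝ)
    (hd : ∀ j : ℕ, 1 ≤ j → j ≤ k →
      P (fun _ => (0 : ℝ)) {x | ∀ i : ℕ, 1 ≤ i → i ≤ j →
        i ≤ (Finset.univ.filter (fun l : Fin k => (l : ℕ) < j ∧ x l ≤ d i)).card} =
        ENNReal.ofReal (1 - α))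
    (hdmono : ∀ i i' : ℕ, 1 ≤ i → i ≤ i' → i' ≤ k → d i ≤ d i') :
    ∀ θ : Fin k → ℝ, P θ {x | ∃ i ∈ suRule d x, θ i ≤ 0} ≤ ENNReal.ofReal α := by
  classical
  intro θ
  set I : Finset (Fin k) := Finset.univ.filter (fun i => θ i ≤ 0) with hIdef
  have hImem : ∀ j, j ∈ I ↔ θ j ≤ 0 := fun j => by simp [hIdef]
  set m := I.card with hm
  set G : Set (Fin k → ℝ) :=
    {x | ∀ i : ℕ, 1 ≤ i → i ≤ m → i ≤ (I.filter fun l => x l ≤ d i).card} with hGdef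
  have hGmeas : MeasurableSet G := meas_G I m d
  have hsub : {x | ∃ i ∈ suRule d x, θ i ≤ 0} ⊆ Gᶜ := fun x hx =>
    stepA d hdmono θ I hImem x hx
  rcases Nat.eq_zero_or_pos m with hm0 | hm1
  · -- no true nulls : the event is empty
    have hIe : I = ∅ := Finset.card_eq_zero.mp hm0
    have : {x : Fin k → ℝ | ∃ i ∈ suRule d x, θ i ≤ 0} = ∅ := by
      ext x
      simp only [Set.mem_setOf_eq, Set.mem_empty_iff_false, iff_false, not_exists]
      rintro i ⟨-, hθ⟩
      have : i ∈ I := (hImem i).mpr hθ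
      simp [hIe] at this
    rw [this, measure_empty]
    exact zero_le
  have hmk : m ≤ k := by
    calc m = I.card := rfl
    _ ≤ Fintype.card (Fin k) := Finset.card_le_univ I
    _ = k := Fintype.card_fin k
  -- Step B : move θ up to θ' with zero null coordinates
  set θ' : Fin k → ℝ := fun i => max (θ i) 0 with hθ'def
  have hθ'I : ∀ i ∈ I, θ' i = 0 := fun i hi => max_eq_right ((hImem i).mp hi)
  have hGcUpper : IsUpperSet Gᶜ := by
    intro a b hab ha hb
    refine ha (fun i h1 h2 => le_trans (hb i h1 h2) (Finset.card_le_card ?_))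
    exact Finset.monotone_filter_right I (fun l _ hl => le_trans (hab l) hl)
  have hB : P θ Gᶜ ≤ P θ' Gᶜ := by
    have := hP.2.2.1 (fun _ => 1) (fun _ => Or.inl rfl) θ θ'
      (fun i => by simp [hθ'def, le_max_left]) Gᶜ hGmeas.compl hGcUpper
    simp only [one_mul] at this; exact this
  -- Step C : replace θ' by the zero parameter
  have hCmap := hP.2.2.2.1 (↑I : Set (Fin k)) θ' (fun _ => 0)
    (fun i hi => hθ'I i (by simpa using hi))
  set G' : Set (↥(↑I : Set (Fin k)) → ℝ) :=
    {y | ∀ i : ℕ, 1 ≤ i → i ≤ m →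
      i ≤ ((Finset.univ.filter fun l : ↥(↑I : Set (Fin k)) => y l ≤ d i)).card} with hG'def
  have hG'meas : MeasurableSet G' := meas_G Finset.univ m d
  have hrestrict : Measurable ((↑I : Set (Fin k)).restrict (π := fun _ => ℝ)) :=
    measurable_pi_lambda _ (fun l => measurable_pi_apply _)
  have hGpre : G = (↑I : Set (Fin k)).restrict ⁻¹' G' := by
    ext x
    simp only [hGdef, hG'def, Set.mem_setOf_eq, Set.mem_preimage, Set.restrict_apply]
    constructor <;> intro h i h1 h2
    · exact le_of_le_of_eq (h i h1 h2) (card_subtype_filter I (fun l => x l ≤ d i)).symm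
    · have := h i h1 h2
      exact le_of_le_of_eq this (card_subtype_filter I (fun l => x l ≤ d i))
  have hC : P θ' G = P (fun _ => (0 : ℝ)) G := by
    rw [hGpre, ← Measure.map_apply hrestrict hG'meas, hCmap,
      Measure.map_apply hrestrict hG'meas]
  -- Step D : exchangeability : P₀ G = 1 - α
  have hJcard : (Finset.univ.filter fun l : Fin k => (l : ℕ) < m).card = m :=
    card_lt_filter hmk
  obtain ⟨π, hπ⟩ := exists_perm_image I (Finset.univ.filter fun l : Fin k => (l : ℕ) < m)
    (hJcard.symm)
  have hφmeas : Measurable (fun x : Fin k → ℝ => x ∘ π) :=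
    measurable_pi_lambda _ (fun l => measurable_pi_apply _)
  have hD : P (fun _ => (0 : ℝ)) G = ENNReal.ofReal (1 - α) := by
    have hpre : (fun x : Fin k → ℝ => x ∘ π) ⁻¹' G =
        {x | ∀ i : ℕ, 1 ≤ i → i ≤ m →
          i ≤ (Finset.univ.filter (fun l : Fin k => (l : ℕ) < m ∧ x l ≤ d i)).card} := by
      ext x
      simp only [Set.mem_preimage, hGdef, Set.mem_setOf_eq, Function.comp_apply]
      have hcard : ∀ i : ℕ, (I.filter fun l => x (π l) ≤ d i).card
          = (Finset.univ.filter fun l : Fin k => (l : ℕ) < m ∧ x l ≤ d i).card := by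
        intro i
        rw [card_filter_comp I π (fun l => x l ≤ d i), hπ, Finset.filter_filter]
      constructor <;> intro h i h1 h2
      · rw [← hcard i]; exact h i h1 h2
      · rw [hcard i]; exact h i h1 h2
    calc P (fun _ => (0 : ℝ)) G
        = Measure.map (fun x : Fin k → ℝ => x ∘ π) (P (fun _ => (0 : ℝ))) G := by
          rw [hE 0 π]
      _ = P (fun _ => (0 : ℝ)) ((fun x : Fin k → ℝ => x ∘ π) ⁻¹' G) :=
          Measure.map_apply hφmeas hGmeas
      _ = ENNReal.ofReal (1 - α) := by rw [hpre]; exact hd m hm1 hmk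
  -- Put it all together
  haveI := hP.1 θ'
  haveI := hP.1 (fun _ => (0 : ℝ))
  have hcompl : P θ' Gᶜ = ENNReal.ofReal α := by
    rw [prob_compl_eq_one_sub hGmeas, hC, hD]
    rw [show (1 : ℝ≥0∞) = ENNReal.ofReal 1 by simp, ← ENNReal.ofReal_sub _ (by linarith [hα.2])]
    norm_num
  calc P θ {x | ∃ i ∈ suRule d x, θ i ≤ 0} ≤ P θ Gᶜ := measure_mono hsub
    _ ≤ P θ' Gᶜ := hB
    _ = ENNReal.ofReal α := hcompl
end
end

section
/- Let k ≥ 2 and adopt the setup below. Let R ⊆ ℝ^k be a Borel-measurable upper set, and fix θ_1, …, θ_{k−1} ∈ ℝ. Let Q_{θ_1,…,θ_{k−1}} denote the law of (X_1, …, X_{k−1}) under P_θ (which by (C) does not depend on θ_k). Then lim_{t → +∞} P_{(θ_1, …, θ_{k−1}, t)}(R) = Q_{θ_1,…,θ_{k−1}}(⋃_{z ∈ ℝ} R^z), where R^z = {(x_1, …, x_{k−1}) : (x_1, …, x_{k−1}, z) ∈ R}. -/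
open MeasureTheory Filter Set
open scoped ENNReal

noncomputable section

private lemma measurable_initAux (n : ℕ) :
    Measurable (fun x : Fin (n + 1) → ℝ => fun i : Fin n => x i.castSucc) :=
  measurable_pi_lambda _ fun _ => measurable_pi_apply _

private lemma measurable_snocAux (n : ℕ) (z : ℝ) :
    Measurable (fun y : Fin n → ℝ => (Fin.snoc y z : Fin (n + 1) → ℝ)) := by
  apply measurable_pi_lambda
  intro i
  refine Fin.lastCases ?_ ?_ i
  · simpa [Fin.snoc_last] using measurable_const
  · intro j
    simpa [Fin.snoc_castSucc] using measurable_pi_apply j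

/-- Lemma 6.2, equation (41): for a measurable upper set `R ⊆ ℝ^k` (`k = n + 1 ≥ 2`) and fixed
`θ₁, …, θ_{k-1}`, the probability of `R` tends, as the last parameter tends to `+∞`, to the
probability under the law `Q` of the first `k - 1` coordinates of the union of the slices
`R^z = {y | (y, z) ∈ R}`. -/
theorem stmt_17 (n : ℕ) (hn : 1 ≤ n)
    (P : (Fin (n + 1) → ℝ) → Measure (Fin (n + 1) → ℝ)) (hP : Setup P)
    (R : Set (Fin (n + 1) → ℝ)) (hRmeas : MeasurableSet R) (hR : IsUpperSet R)
    (θ : Fin n → ℝ)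
    (Q : Measure (Fin n → ℝ))
    (hQ : Q = Measure.map (fun x : Fin (n + 1) → ℝ => fun i : Fin n => x i.castSucc)
      (P (Fin.snoc θ 0))) :
    Filter.Tendsto (fun t : ℝ => P (Fin.snoc θ t) R) Filter.atTop
      (nhds (Q (⋃ z : ℝ, {y : Fin n → ℝ | Fin.snoc y z ∈ R}))) := by
  obtain ⟨hprob, -, -, hC, hL⟩ := hP
  set π : (Fin (n + 1) → ℝ) → (Fin n → ℝ) := fun x i => x i.castSucc with hπ
  have hπm : Measurable π := measurable_initAux n
  set S : ℝ → Set (Fin n → ℝ) := fun z => {y | Fin.snoc y z ∈ R} with hSdef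
  have hSmeas : ∀ z, MeasurableSet (S z) := fun z => (measurable_snocAux n z) hRmeas
  have hSmono : ∀ ⦃z z' : ℝ⦄, z ≤ z' → S z ⊆ S z' := by
    intro z z' hz y hy
    refine hR (fun i => ?_) hy
    refine Fin.lastCases ?_ ?_ i
    · simpa [Fin.snoc_last] using hz
    · intro j; simp [Fin.snoc_castSucc]
  have hU : (⋃ z : ℝ, S z) = ⋃ m : ℕ, S (m : ℝ) := by
    apply Set.Subset.antisymm
    · exact Set.iUnion_subset fun z =>
        (hSmono (Nat.le_ceil z)).trans (Set.subset_iUnion (fun m : ℕ => S (m : ℝ)) ⌈z⌉₊)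
    · exact Set.iUnion_subset fun m => Set.subset_iUnion (fun z : ℝ => S z) (m : ℝ)
  -- marginal law independent of last parameter
  have hmap : ∀ t : ℝ, Measure.map π (P (Fin.snoc θ t)) = Q := by
    intro t
    rw [hQ]
    set I : Set (Fin (n + 1)) := {i | i ≠ Fin.last n} with hI
    have hrm : Measurable (I.restrict : (Fin (n + 1) → ℝ) → (I → ℝ)) :=
      measurable_pi_lambda _ fun _ => measurable_pi_apply _
    have hmem : ∀ i : Fin n, (i.castSucc : Fin (n+1)) ∈ I := fun i => (Fin.castSucc_lt_last i).ne
    set φ : (I → ℝ) → (Fin n → ℝ) := fun g i => g ⟨i.castSucc, hmem i⟩ with hφ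
    have hφm : Measurable φ := measurable_pi_lambda _ fun _ => measurable_pi_apply _
    have h1 : π = φ ∘ I.restrict := rfl
    have key := hC I (Fin.snoc θ t) (Fin.snoc θ 0) ?_
    · show Measure.map π _ = Measure.map (fun x : Fin (n + 1) → ℝ => fun i : Fin n => x i.castSucc) _
      rw [show (fun x : Fin (n + 1) → ℝ => fun i : Fin n => x i.castSucc) = π from rfl]
      rw [h1, ← Measure.map_map hφm hrm, ← Measure.map_map hφm hrm, key]
    · intro i hi
      obtain ⟨j, rfl⟩ := Fin.exists_castSucc_eq.2 hi
      simp [Fin.snoc_castSucc]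
  have hQ_apply : ∀ (t : ℝ) (A : Set (Fin n → ℝ)), MeasurableSet A →
      P (Fin.snoc θ t) (π ⁻¹' A) = Q A := by
    intro t A hA
    rw [← hmap t, Measure.map_apply hπm hA]
  have hsnoc_eq : ∀ x : Fin (n + 1) → ℝ, Fin.snoc (π x) (x (Fin.last n)) = x := by
    intro x
    funext i
    refine Fin.lastCases ?_ ?_ i
    · simp [Fin.snoc_last]
    · intro j; simp [Fin.snoc_castSucc, hπ]
  -- (L) in the needed form
  have hupdate : ∀ t : ℝ, Function.update (Fin.snoc θ (0 : ℝ)) (Fin.last n) t = (Fin.snoc θ t : Fin (n + 1) → ℝ) := by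
    intro t
    funext i
    refine Fin.lastCases ?_ ?_ i
    · simp
    · intro j
      rw [Function.update_of_ne (Fin.castSucc_lt_last j).ne]
      simp
  have hg : ∀ m : ℕ,
      Tendsto (fun t => P (Fin.snoc θ t) {x | x (Fin.last n) ≤ (m : ℝ)}) atTop (nhds 0) := by
    intro m
    have h := (hL (Fin.snoc θ 0) (Fin.last n) (m : ℝ)).1
    simpa only [hupdate] using h
  -- upper bound
  have hUmeas : MeasurableSet (⋃ m : ℕ, S (m : ℝ)) := MeasurableSet.iUnion fun m => hSmeas _
  have hub : ∀ t : ℝ, P (Fin.snoc θ t) R ≤ Q (⋃ m : ℕ, S (m : ℝ)) := by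
    intro t
    rw [← hQ_apply t _ hUmeas]
    apply measure_mono
    intro x hx
    refine Set.mem_iUnion.2 ⟨⌈x (Fin.last n)⌉₊, ?_⟩
    refine hSmono (Nat.le_ceil _) ?_
    show Fin.snoc (π x) (x (Fin.last n)) ∈ R
    rw [hsnoc_eq x]; exact hx
  -- lower bound
  have hlb : ∀ (m : ℕ) (t : ℝ),
      Q (S (m : ℝ)) ≤ P (Fin.snoc θ t) R + P (Fin.snoc θ t) {x | x (Fin.last n) ≤ (m : ℝ)} := by
    intro m t
    rw [← hQ_apply t _ (hSmeas _)]
    refine le_trans (measure_mono ?_) (measure_union_le _ _)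
    intro x hx
    by_cases h : x (Fin.last n) ≤ (m : ℝ)
    · exact Or.inr h
    · left
      have hle : Fin.snoc (π x) ((m : ℕ) : ℝ) ≤ x := by
        intro i
        refine Fin.lastCases ?_ ?_ i
        · simpa [Fin.snoc_last] using (not_le.1 h).le
        · intro j; simp [Fin.snoc_castSucc, hπ]
      exact hR hle hx
  have hQfin : IsProbabilityMeasure Q := by
    rw [hQ]
    haveI := hprob (Fin.snoc θ 0)
    exact Measure.isProbabilityMeasure_map hπm.aemeasurable
  have hsup : Q (⋃ m : ℕ, S (m : ℝ)) = ⨆ m : ℕ, Q (S (m : ℝ)) := by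
    refine Directed.measure_iUnion ?_
    intro a b
    rcases le_total a b with hab | hab
    · exact ⟨b, hSmono (by exact_mod_cast hab), subset_rfl⟩
    · exact ⟨a, subset_rfl, hSmono (by exact_mod_cast hab)⟩
  rw [show (⋃ z : ℝ, {y : Fin n → ℝ | Fin.snoc y z ∈ R}) = ⋃ m : ℕ, S (m : ℝ) from hU]
  refine tendsto_of_le_liminf_of_limsup_le ?_ ?_
  · rw [hsup]
    refine iSup_le fun m => ?_
    have hfin : Q (S (m : ℝ)) ≠ ⊤ := measure_ne_top Q _
    have hlim : Filter.liminf
        (fun t => Q (S (m : ℝ)) - P (Fin.snoc θ t) {x | x (Fin.last n) ≤ (m : ℝ)}) atTop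
        = Q (S (m : ℝ)) := by
      rw [ENNReal.liminf_const_sub atTop _ hfin, (hg m).limsup_eq, tsub_zero]
    calc Q (S (m : ℝ)) = _ := hlim.symm
      _ ≤ liminf (fun t : ℝ => P (Fin.snoc θ t) R) atTop := by
          refine Filter.liminf_le_liminf (Eventually.of_forall fun t => ?_)
          exact tsub_le_iff_right.2 (hlb m t)
  · exact Filter.limsup_le_of_le (by isBoundedDefault) (Eventually.of_forall hub)
end
end

section
/- Let k ≥ 2 and adopt the setup below. Let R ⊆ ℝ^k be a Borel-measurable upper set, and fix θ_1, …, θ_{k−1} ∈ ℝ. Let Q_{θ_1,…,θ_{k−1}} denote the law of (X_1, …, X_{k−1}) under P_θ (which by (C) does not depend on θ_k). Then lim_{t → −∞} P_{(θ_1, …, θ_{k−1}, t)}(R) = Q_{θ_1,…,θ_{k−1}}(⋂_{z ∈ ℝ} R^z), where R^z = {(x_1, …, x_{k−1}) : (x_1, …, x_{k−1}, z) ∈ R}. -/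
open MeasureTheory Filter Set
open scoped ENNReal

noncomputable section

/-- Lemma 6.2, equation (42): for a measurable upper set `R ⊆ ℝ^k` (`k = n + 1 ≥ 2`) and fixed
`θ₁, …, θ_{k-1}`, the probability of `R` tends, as the last parameter tends to `-∞`, to the
probability under the law `Q` of the first `k - 1` coordinates of the intersection of the
slices `R^z = {y | (y, z) ∈ R}`. -/
theorem stmt_18 (n : ℕ) (hn : 1 ≤ n)
    (P : (Fin (n + 1) → ℝ) → Measure (Fin (n + 1) → ℝ)) (hP : Setup P)
    (R : Set (Fin (n + 1) → ℝ)) (hRmeas : MeasurableSet R) (hR : IsUpperSet R)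
    (θ : Fin n → ℝ)
    (Q : Measure (Fin n → ℝ))
    (hQ : Q = Measure.map (fun x : Fin (n + 1) → ℝ => fun i : Fin n => x i.castSucc)
      (P (Fin.snoc θ 0))) :
    Filter.Tendsto (fun t : ℝ => P (Fin.snoc θ t) R) Filter.atBot
      (nhds (Q (⋂ z : ℝ, {y : Fin n → ℝ | Fin.snoc y z ∈ R}))) := by
  obtain ⟨hprob, hdens, hM, hC, hL⟩ := hP
  set π : (Fin (n + 1) → ℝ) → (Fin n → ℝ) := fun x i => x i.castSucc with hπ
  have hπm : Measurable π := measurable_pi_lambda _ fun i => measurable_pi_apply _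
  set S : ℝ → Set (Fin n → ℝ) := fun z => {y | Fin.snoc y z ∈ R} with hS
  have hsnocm : ∀ z : ℝ, Measurable (fun y : Fin n → ℝ => (Fin.snoc y z : Fin (n+1) → ℝ)) := by
    intro z
    refine measurable_pi_lambda _ fun i => ?_
    induction i using Fin.lastCases with
    | last => simpa [Fin.snoc_last] using measurable_const
    | cast j => simpa [Fin.snoc_castSucc] using measurable_pi_apply j
  have hSm : ∀ z, MeasurableSet (S z) := fun z => (hsnocm z) hRmeas
  have hSmono : Monotone S := by
    intro z w hzw y hy
    exact hR (by
      intro i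
      induction i using Fin.lastCases with
      | last => simpa [Fin.snoc_last] using hzw
      | cast j => simp [Fin.snoc_castSucc]) hy
  set A : Set (Fin n → ℝ) := ⋂ z : ℝ, S z with hA
  have hAeq : A = ⋂ m : ℕ, S (-(m : ℝ)) := by
    apply subset_antisymm
    · exact fun y hy => mem_iInter.2 fun m => mem_iInter.1 hy _
    · intro y hy
      refine mem_iInter.2 fun z => ?_
      obtain ⟨m, hm⟩ := exists_nat_ge (-z)
      have h1 : y ∈ S (-(m : ℝ)) := mem_iInter.1 hy m
      exact hSmono (by linarith) h1
  have hAm : MeasurableSet A := by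
    rw [hAeq]; exact MeasurableSet.iInter fun m => hSm _
  -- the marginal law of the first n coordinates doesn't depend on t
  have hmap : ∀ t : ℝ, Measure.map π (P (Fin.snoc θ t)) = Q := by
    intro t
    set I : Set (Fin (n + 1)) := {i | i ≠ Fin.last n} with hI
    have hmem : ∀ i : Fin n, i.castSucc ∈ I := fun i => (Fin.castSucc_lt_last i).ne
    set g : (I → ℝ) → (Fin n → ℝ) := fun h i => h ⟨i.castSucc, hmem i⟩ with hg
    have hgm : Measurable g := measurable_pi_lambda _ fun i => measurable_pi_apply _
    have hrm : Measurable (I.restrict : (Fin (n+1) → ℝ) → (I → ℝ)) :=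
      measurable_pi_lambda _ fun i => measurable_pi_apply _
    have hcomp : π = g ∘ I.restrict := rfl
    have hparam : ∀ i ∈ I, (Fin.snoc θ t : Fin (n+1) → ℝ) i = (Fin.snoc θ 0 : Fin (n+1) → ℝ) i := by
      intro i hi
      obtain ⟨j, rfl⟩ := Fin.exists_castSucc_eq.2 hi
      simp [Fin.snoc_castSucc]
    rw [hQ, hcomp, ← Measure.map_map hgm hrm, ← Measure.map_map hgm hrm,
      hC I (Fin.snoc θ t) (Fin.snoc θ 0) hparam]
  have hQfin : Q univ ≠ ∞ := by
    rw [hQ, Measure.map_apply hπm MeasurableSet.univ]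
    have := hprob (Fin.snoc θ 0)
    simp
  -- lower bound
  have hlow : ∀ t : ℝ, Q A ≤ P (Fin.snoc θ t) R := by
    intro t
    rw [← hmap t, Measure.map_apply hπm hAm]
    refine measure_mono fun x hx => ?_
    have hx' : Fin.snoc (π x) (x (Fin.last n)) ∈ R := mem_iInter.1 hx (x (Fin.last n))
    have : (Fin.snoc (π x) (x (Fin.last n)) : Fin (n+1) → ℝ) = x := by
      funext i
      induction i using Fin.lastCases with
      | last => simp [Fin.snoc_last]
      | cast j => simp [Fin.snoc_castSucc, hπ]
    rwa [this] at hx'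
  -- tail control from (L)
  have htail : ∀ z : ℝ,
      Tendsto (fun t : ℝ => P (Fin.snoc θ t) {x | z ≤ x (Fin.last n)}) atBot (nhds 0) := by
    intro z
    have h := (hL (Fin.snoc θ 0) (Fin.last n) z).2
    have hupd : ∀ t : ℝ, Function.update (Fin.snoc θ 0 : Fin (n+1) → ℝ) (Fin.last n) t
        = Fin.snoc θ t := fun t => by simp [Fin.update_snoc_last]
    simpa [hupd] using h
  -- upper bound
  have hup : ∀ (z : ℝ) (t : ℝ),
      P (Fin.snoc θ t) R ≤ Q (S z) + P (Fin.snoc θ t) {x | z ≤ x (Fin.last n)} := by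
    intro z t
    have hsub : R ⊆ π ⁻¹' (S z) ∪ {x | z ≤ x (Fin.last n)} := by
      intro x hx
      rcases le_or_gt z (x (Fin.last n)) with h | h
      · exact Or.inr h
      · left
        refine hR (fun i => ?_) hx
        induction i using Fin.lastCases with
        | last => simpa [Fin.snoc_last] using h.le
        | cast j => simp [Fin.snoc_castSucc, hπ]
    calc P (Fin.snoc θ t) R ≤ P (Fin.snoc θ t) (π ⁻¹' (S z) ∪ {x | z ≤ x (Fin.last n)}) :=
          measure_mono hsub
      _ ≤ P (Fin.snoc θ t) (π ⁻¹' (S z)) + P (Fin.snoc θ t) {x | z ≤ x (Fin.last n)} :=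
          measure_union_le _ _
      _ = Q (S z) + P (Fin.snoc θ t) {x | z ≤ x (Fin.last n)} := by
          rw [← hmap t, Measure.map_apply hπm (hSm z)]
  -- limsup bound for each z
  have hlimsup : ∀ z : ℝ,
      limsup (fun t : ℝ => P (Fin.snoc θ t) R) atBot ≤ Q (S z) := by
    intro z
    have h1 : limsup (fun t : ℝ => P (Fin.snoc θ t) R) atBot ≤
        limsup (fun t : ℝ => Q (S z) + P (Fin.snoc θ t) {x | z ≤ x (Fin.last n)}) atBot :=
      limsup_le_limsup (Eventually.of_forall (hup z))
    have h2 : Tendsto (fun t : ℝ => Q (S z) + P (Fin.snoc θ t) {x | z ≤ x (Fin.last n)})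
        atBot (nhds (Q (S z) + 0)) := (Tendsto.const_add _ (htail z))
    rw [add_zero] at h2
    exact h1.trans h2.limsup_eq.le
  have hQSA : Tendsto (fun m : ℕ => Q (S (-(m : ℝ)))) atTop (nhds (Q A)) := by
    rw [hAeq]
    exact tendsto_measure_iInter_atTop (fun m => (hSm _).nullMeasurableSet)
      (fun a b hab => hSmono (neg_le_neg (Nat.cast_le.2 hab)))
      ⟨0, (lt_of_le_of_lt (measure_mono (subset_univ _)) (lt_of_le_of_ne le_top hQfin)).ne⟩
  have hsup : limsup (fun t : ℝ => P (Fin.snoc θ t) R) atBot ≤ Q A :=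
    ge_of_tendsto' hQSA fun m => hlimsup _
  have hinf : Q A ≤ liminf (fun t : ℝ => P (Fin.snoc θ t) R) atBot :=
    le_liminf_of_le (by isBoundedDefault) (Eventually.of_forall hlow)
  exact tendsto_of_le_liminf_of_limsup_le hinf hsup
end
end
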